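/- Let 1 → K → G → Q → 1 be an extension of profinite groups where Q is finite and K is a topologically finitely generated pro-l group for some prime l. Then the Frattini subgroup of G is open in G. -/

import Mathlib

open scoped commutatorElement

private lemma aux_pow_mod {F : Type*} [Monoid F] {a : F} {l : ℕ} (h : a ^ l = 1) (m : ℕ) :
    a ^ (m % l) = a ^ m := by
  conv_rhs => rw [← Nat.mod_add_div m l]
  rw [pow_add, pow_mul, h, one_pow, mul_one]

private lemma aux_pgroup_nongen {l : ℕ} (hl : Nat.Prime l) {F : Type*} [Group F] [Finite F]
    (hF : IsPGroup l F) (S : Subgroup F)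
    (h : S ⊔ Subgroup.closure {x : F | (∃ y : F, y ^ l = x) ∨ ∃ y z : F, ⁅y, z⁆ = x} = ⊤) :
    S = ⊤ := by
  by_contra hS
  haveI : Fact l.Prime := ⟨hl⟩
  haveI : Finite (Subgroup F) :=
    Finite.of_injective (fun H : Subgroup F => (H : Set F)) SetLike.coe_injective
  obtain ⟨M, hM, hSM⟩ := (IsCoatomic.eq_top_or_exists_le_coatom S).resolve_left hS
  haveI : Group.IsNilpotent F := hF.isNilpotent
  haveI hMn : M.Normal :=
    Subgroup.NormalizerCondition.normal_of_coatom M normalizerCondition_of_isNilpotent hM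
  have hsub : ∀ A : Subgroup (F ⧸ M), A = ⊥ ∨ A = ⊤ := by
    intro A
    have h1 : M ≤ A.comap (QuotientGroup.mk' M) := by
      intro m hm
      have h0 : QuotientGroup.mk' M m = 1 := (QuotientGroup.eq_one_iff m).mpr hm
      exact Subgroup.mem_comap.mpr (h0 ▸ A.one_mem)
    rcases eq_or_lt_of_le h1 with he | hlt
    · left
      have hAe : A = Subgroup.map (QuotientGroup.mk' M) (A.comap (QuotientGroup.mk' M)) :=
        (Subgroup.map_comap_eq_self_of_surjective (QuotientGroup.mk'_surjective M) A).symm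
      rw [hAe, ← he, eq_bot_iff]
      rintro x ⟨m, hm, rfl⟩
      simpa [Subgroup.mem_bot] using (QuotientGroup.eq_one_iff m).mpr hm
    · right
      have htop : A.comap (QuotientGroup.mk' M) = ⊤ := hM.2 _ hlt
      rw [← Subgroup.map_comap_eq_self_of_surjective (QuotientGroup.mk'_surjective M) A, htop]
      exact Subgroup.map_top_of_surjective _ (QuotientGroup.mk'_surjective M)
  have hcomm : ∀ a b : F ⧸ M, a * b = b * a := by
    intro a b
    rcases eq_or_ne a 1 with rfl | ha
    · simp
    have h2 := (hsub (Subgroup.zpowers a)).resolve_left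
      (by simpa [Subgroup.zpowers_eq_bot] using ha)
    have hb : b ∈ Subgroup.zpowers a := h2 ▸ Subgroup.mem_top b
    obtain ⟨n, rfl⟩ := Subgroup.mem_zpowers_iff.mp hb
    exact ((Commute.refl a).zpow_right n).eq
  have hexp : ∀ y : F ⧸ M, y ^ l = 1 := by
    intro y
    by_contra hy
    have h2 := (hsub (Subgroup.zpowers (y ^ l))).resolve_left
      (by simpa [Subgroup.zpowers_eq_bot] using hy)
    have hmem : y ∈ Subgroup.zpowers (y ^ l) := h2 ▸ Subgroup.mem_top y
    obtain ⟨n, hn⟩ := Subgroup.mem_zpowers_iff.mp hmem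
    have h3 : y ^ ((l : ℤ) * n - 1) = 1 := by
      rw [zpow_sub, zpow_one, zpow_mul, zpow_natCast, hn, mul_inv_cancel]
    have h4 : (orderOf y : ℤ) ∣ (l : ℤ) * n - 1 := orderOf_dvd_iff_zpow_eq_one.mpr h3
    obtain ⟨k, hk⟩ := (hF.to_quotient M) y
    have h5 : orderOf y ∣ l ^ k := orderOf_dvd_of_pow_eq_one hk
    obtain ⟨j, _, hj2⟩ := (Nat.dvd_prime_pow hl).mp h5
    have hyne : y ≠ 1 := fun h' => hy (by simp [h'])
    have hj0 : j ≠ 0 := by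
      intro h'
      rw [h', pow_zero] at hj2
      exact hyne (orderOf_eq_one_iff.mp hj2)
    have h6 : (l : ℤ) ∣ (l : ℤ) * n - 1 := by
      refine dvd_trans ?_ h4
      exact_mod_cast (hj2 ▸ dvd_pow_self l hj0 : l ∣ orderOf y)
    have h7 : (l : ℤ) ∣ 1 := by
      have := dvd_sub (dvd_mul_right (l : ℤ) n) h6
      simpa using this
    have := Int.le_of_dvd one_pos h7
    have := hl.two_le
    omega
  have hRM : Subgroup.closure {x : F | (∃ y : F, y ^ l = x) ∨ ∃ y z : F, ⁅y, z⁆ = x} ≤ M := by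
    rw [Subgroup.closure_le]
    rintro x (⟨y, rfl⟩ | ⟨y, z, rfl⟩)
    · have : ((y ^ l : F) : F ⧸ M) = 1 := by
        rw [QuotientGroup.mk_pow]
        exact hexp _
      exact (QuotientGroup.eq_one_iff _).mp this
    · have h0 : QuotientGroup.mk' M ⁅y, z⁆ = 1 := by
        rw [map_commutatorElement, commutatorElement_eq_one_iff_mul_comm]
        exact hcomm _ _
      rw [QuotientGroup.mk'_apply] at h0
      exact (QuotientGroup.eq_one_iff _).mp h0
  exact hM.1 (top_le_iff.mp (h ▸ sup_le hSM hRM))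

private lemma aux_card_le {F : Type*} [Group F] {l : ℕ} (hl : Nat.Prime l)
    (T : Finset F) (hgen : Subgroup.closure (T : Set F) = ⊤)
    (hcomm : ∀ a b : F, a * b = b * a) (hexp : ∀ a : F, a ^ l = 1) :
    Nat.card F ≤ l ^ T.card := by
  haveI : Fact (1 < l) := ⟨hl.one_lt⟩
  haveI : NeZero l := ⟨hl.ne_zero⟩
  letI : CommGroup F := { (inferInstance : Group F) with mul_comm := hcomm }
  classical
  set f : ({x // x ∈ T} → ZMod l) → F := fun c => ∏ t : {x // x ∈ T}, (t : F) ^ (c t).val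
    with hf
  have hfhom : ∀ c d, f (c + d) = f c * f d := by
    intro c d
    rw [hf]
    simp only
    rw [← Finset.prod_mul_distrib]
    refine Finset.prod_congr rfl fun t _ => ?_
    rw [← pow_add, Pi.add_apply, ZMod.val_add, aux_pow_mod (hexp _)]
  have hone : f 0 = 1 := by simp [hf, ZMod.val_zero]
  let A : Subgroup F :=
    { carrier := Set.range f
      one_mem' := ⟨0, hone⟩
      mul_mem' := by rintro _ _ ⟨c, rfl⟩ ⟨d, rfl⟩; exact ⟨c + d, hfhom c d⟩
      inv_mem' := by
        rintro _ ⟨c, rfl⟩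
        refine ⟨-c, eq_inv_of_mul_eq_one_left ?_⟩
        rw [← hfhom, neg_add_cancel, hone] }
  have hrange : ∀ x ∈ T, x ∈ A := by
    intro x hx
    refine ⟨fun s => if s = ⟨x, hx⟩ then 1 else 0, ?_⟩
    rw [hf]
    simp only
    rw [Finset.prod_eq_single (⟨x, hx⟩ : {x // x ∈ T})]
    · simp [ZMod.val_one]
    · intro b _ hb
      simp [hb, ZMod.val_zero]
    · intro h
      exact absurd (Finset.mem_univ _) h
  have hA : A = ⊤ := top_le_iff.mp (hgen ▸ (Subgroup.closure_le A).mpr hrange)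
  have hsurj : Function.Surjective f := fun y => by
    have : y ∈ A := hA.symm ▸ Subgroup.mem_top y
    exact this
  calc Nat.card F ≤ Nat.card ({x // x ∈ T} → ZMod l) :=
        Nat.card_le_card_of_surjective f hsurj
    _ = l ^ T.card := by
        rw [Nat.card_fun, Nat.card_zmod, Nat.card_eq_fintype_card, Fintype.card_coe]

/-- The set of maximal (proper) open subgroups of a topological group. -/
def maxOpenSubgroups (G : Type*) [Group G] [TopologicalSpace G] : Set (Subgroup G) :=
  {K | IsOpen (K : Set G) ∧ K ≠ ⊤ ∧
    ∀ K' : Subgroup G, IsOpen (K' : Set G) → K < K' → K' = ⊤}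

/-- The Frattini subgroup of a topological group: the intersection of all maximal open
subgroups. -/
def frattiniOpen (G : Type*) [Group G] [TopologicalSpace G] : Subgroup G :=
  sInf (maxOpenSubgroups G)

/-- Let `1 → K → G → Q → 1` be an extension of profinite groups with `Q`
finite and `K = ker φ` a topologically finitely generated pro-`l` group (`l` prime). Then the
Frattini subgroup of `G` is open in `G`. -/
theorem stmt_16 (G Q : Type*) [Group G] [TopologicalSpace G] [IsTopologicalGroup G]
    [CompactSpace G] [TotallyDisconnectedSpace G] [T2Space G] [Group Q] [Finite Q]
    (φ : G →* Q) (hφ : Function.Surjective φ)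
    (hker_open : IsOpen ((φ.ker : Subgroup G) : Set G))
    (l : ℕ) (hl : Nat.Prime l)
    (hfg : ∃ T : Finset ↥φ.ker,
      (Subgroup.closure (T : Set ↥φ.ker)).topologicalClosure = ⊤)
    (hprol : ∀ (U : Subgroup ↥φ.ker) [U.Normal], IsOpen (U : Set ↥φ.ker) →
      Finite (↥φ.ker ⧸ U) → IsPGroup l (↥φ.ker ⧸ U)) :
    IsOpen ((frattiniOpen G : Subgroup G) : Set G) := by
  classical
  haveI : Fact l.Prime := ⟨hl⟩
  set K : Subgroup G := φ.ker with hK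
  obtain ⟨T, hT⟩ := hfg
  haveI hKnormal : K.Normal := hK ▸ MonoidHom.normal_ker φ
  have hKclosed : IsClosed (K : Set G) := Subgroup.isClosed_of_isOpen K hker_open
  haveI : CompactSpace ↥K := isCompact_iff_compactSpace.mp hKclosed.isCompact
  set gset : Set G := {x | (∃ y ∈ K, y ^ l = x) ∨ ∃ y ∈ K, ∃ z ∈ K, ⁅y, z⁆ = x} with hgset
  set P : Subgroup G := Subgroup.closure gset with hP
  have hPK : P ≤ K := by
    rw [hP, Subgroup.closure_le]
    rintro x (⟨y, hy, rfl⟩ | ⟨y, hy, z, hz, rfl⟩)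
    · exact pow_mem hy l
    · rw [commutatorElement_def]
      exact mul_mem (mul_mem (mul_mem hy hz) (inv_mem hy)) (inv_mem hz)
  haveI hPnormal : P.Normal := by
    constructor
    intro n hn g
    have hsub : ⇑(MulAut.conj g).toMonoidHom '' gset ⊆ gset := by
      rintro x ⟨y, (⟨a, ha, rfl⟩ | ⟨a, ha, b, hb, rfl⟩), rfl⟩
      · refine Or.inl ⟨g * a * g⁻¹, hKnormal.conj_mem a ha g, ?_⟩
        rw [map_pow]
        simp [MulAut.conj_apply]
      · refine Or.inr ⟨g * a * g⁻¹, hKnormal.conj_mem a ha g,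
          g * b * g⁻¹, hKnormal.conj_mem b hb g, ?_⟩
        rw [map_commutatorElement]
        simp [MulAut.conj_apply]
    have h2 : Subgroup.map (MulAut.conj g).toMonoidHom P ≤ P := by
      rw [hP, MonoidHom.map_closure]
      exact Subgroup.closure_le _ |>.mpr (le_trans hsub Subgroup.subset_closure)
    refine h2 ⟨n, hn, ?_⟩
    simp [MulAut.conj_apply]
  -- membership of basic elements of `gset` in `P`
  have hpowP : ∀ x : ↥K, ((x : G) ^ l) ∈ P := fun x =>
    Subgroup.subset_closure (Or.inl ⟨(x : G), x.2, rfl⟩)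
  have hcommP : ∀ x y : ↥K, (⁅(x : G), (y : G)⁆) ∈ P := fun x y =>
    Subgroup.subset_closure (Or.inr ⟨(x : G), x.2, (y : G), y.2, rfl⟩)
  -- THE CORE LEMMA: an open subgroup `H ≤ K` with `H ⊔ P = K` equals `K`.
  have core : ∀ H : Subgroup G, IsOpen (H : Set G) → H ≤ K → (∀ k ∈ K, k ∈ H ⊔ P) → K ≤ H := by
    intro H hHopen hHK hdecomp
    haveI : Finite (G ⧸ H) := Subgroup.quotient_finite_of_isOpen H hHopen
    haveI : H.FiniteIndex := Subgroup.finiteIndex_of_finite_quotient (H := H)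
    set V := H.normalCore with hV
    have hVclosed : IsClosed (V : Set G) :=
      Subgroup.normalCore_isClosed H (Subgroup.isClosed_of_isOpen H hHopen)
    haveI : V.FiniteIndex := hV ▸ Subgroup.finiteIndex_normalCore H
    have hVopen : IsOpen (V : Set G) := Subgroup.isOpen_of_isClosed_of_finiteIndex V hVclosed
    set V' := V.subgroupOf K with hV'
    have hV'open : IsOpen (V' : Set ↥K) := by
      rw [hV', Subgroup.coe_subgroupOf]
      exact hVopen.preimage continuous_subtype_val
    haveI hfin : Finite (↥K ⧸ V') := Subgroup.quotient_finite_of_isOpen V' hV'open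
    have hFp : IsPGroup l (↥K ⧸ V') := hprol V' hV'open hfin
    set π := QuotientGroup.mk' V' with hπ
    set S := Subgroup.map π (H.subgroupOf K) with hS
    have hPR : ∀ p (hp : p ∈ P) (hpK : p ∈ K),
        π ⟨p, hpK⟩ ∈ Subgroup.closure
          {x : ↥K ⧸ V' | (∃ y : ↥K ⧸ V', y ^ l = x) ∨ ∃ y z : ↥K ⧸ V', ⁅y, z⁆ = x} := by
      intro p hp
      rw [hP] at hp
      refine Subgroup.closure_induction
        (p := fun x _ => ∀ (hxK : x ∈ K), π ⟨x, hxK⟩ ∈ Subgroup.closure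
          {x : ↥K ⧸ V' | (∃ y : ↥K ⧸ V', y ^ l = x) ∨ ∃ y z : ↥K ⧸ V', ⁅y, z⁆ = x}) ?_ ?_ ?_ ?_ hp
      · rintro x (⟨y, hy, rfl⟩ | ⟨y, hy, z, hz, rfl⟩) hxK
        · refine Subgroup.subset_closure (Or.inl ⟨π ⟨y, hy⟩, ?_⟩)
          rw [← map_pow]
          exact congrArg π (Subtype.ext (by simp))
        · refine Subgroup.subset_closure (Or.inr ⟨π ⟨y, hy⟩, π ⟨z, hz⟩, ?_⟩)
          rw [← map_commutatorElement]
          exact congrArg π (Subtype.ext (by simp [commutatorElement_def]))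
      · intro hxK
        have h1 : (⟨(1 : G), hxK⟩ : ↥K) = 1 := rfl
        rw [h1, map_one]
        exact Subgroup.one_mem _
      · intro x y hx hy ihx ihy hxyK
        have hxK : x ∈ K := hPK (hP ▸ hx)
        have hyK : y ∈ K := hPK (hP ▸ hy)
        have h1 : (⟨x * y, hxyK⟩ : ↥K) = ⟨x, hxK⟩ * ⟨y, hyK⟩ := rfl
        rw [h1, map_mul]
        exact mul_mem (ihx hxK) (ihy hyK)
      · intro x hx ihx hxK
        have hxK' : x ∈ K := hPK (hP ▸ hx)
        have h1 : (⟨x⁻¹, hxK⟩ : ↥K) = (⟨x, hxK'⟩ : ↥K)⁻¹ := rfl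
        rw [h1, map_inv]
        exact inv_mem (ihx hxK')
    have hSR : S ⊔ Subgroup.closure
        {x : ↥K ⧸ V' | (∃ y : ↥K ⧸ V', y ^ l = x) ∨ ∃ y z : ↥K ⧸ V', ⁅y, z⁆ = x} = ⊤ := by
      rw [eq_top_iff]
      intro f _
      obtain ⟨k, rfl⟩ := QuotientGroup.mk'_surjective V' f
      have hk : (k : G) ∈ (↑(H ⊔ P) : Set G) := hdecomp (k : G) k.2
      rw [Subgroup.mul_normal H P] at hk
      obtain ⟨h, hh, p, hp, hmul⟩ := hk
      have hhK : h ∈ K := hHK hh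
      have hpK : p ∈ K := hPK hp
      have hkk : k = (⟨h, hhK⟩ : ↥K) * ⟨p, hpK⟩ := Subtype.ext (by simp [← hmul])
      rw [hkk, map_mul]
      exact mul_mem
        (Subgroup.mem_sup_left ⟨⟨h, hhK⟩, Subgroup.mem_subgroupOf.mpr hh, rfl⟩)
        (Subgroup.mem_sup_right (hPR p hp hpK))
    have hStop : S = ⊤ := aux_pgroup_nongen hl hFp S hSR
    intro k hkK
    have hmem : π ⟨k, hkK⟩ ∈ S := hStop.symm ▸ Subgroup.mem_top _
    rw [hS, Subgroup.mem_map] at hmem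
    obtain ⟨h, hh, heq⟩ := hmem
    have h2 : h⁻¹ * ⟨k, hkK⟩ ∈ V' := by
      have h0 : π (h⁻¹ * ⟨k, hkK⟩) = 1 := by rw [map_mul, map_inv, heq]; simp
      rwa [hπ, ← MonoidHom.mem_ker, QuotientGroup.ker_mk'] at h0
    have h3 : h⁻¹ * ⟨k, hkK⟩ ∈ H.subgroupOf K :=
      Subgroup.mem_subgroupOf.mpr (H.normalCore_le (Subgroup.mem_subgroupOf.mp h2))
    have h4 : (⟨k, hkK⟩ : ↥K) ∈ H.subgroupOf K := by
      have := mul_mem hh h3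
      rwa [mul_inv_cancel_left] at this
    exact Subgroup.mem_subgroupOf.mp h4
  -- THE INDEX BOUND for `U ⊔ P`, `U` an open normal subgroup of `G` inside `K`.
  have bnd : ∀ U : Subgroup G, U.Normal → IsOpen (U : Set G) → U ≤ K →
      ((U ⊔ P).index ≠ 0 ∧ (U ⊔ P).index ≤ l ^ T.card * K.index) := by
    intro U hUn hUo hUK
    haveI := hUn
    set W := U ⊔ P with hW
    have hWopen : IsOpen (W : Set G) := Subgroup.isOpen_mono le_sup_left hUo
    have hWK : W ≤ K := sup_le hUK hPK
    haveI hWn : W.Normal := Subgroup.sup_normal U P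
    set W' := W.subgroupOf K with hW'
    haveI : W'.Normal := hWn.subgroupOf K
    have hW'open : IsOpen (W' : Set ↥K) := by
      rw [hW', Subgroup.coe_subgroupOf]
      exact hWopen.preimage continuous_subtype_val
    haveI hfin : Finite (↥K ⧸ W') := Subgroup.quotient_finite_of_isOpen W' hW'open
    set π := QuotientGroup.mk' W' with hπ
    have hPW' : ∀ x : ↥K, (x : G) ∈ P → π x = 1 := by
      intro x hx
      rw [hπ]
      refine (QuotientGroup.eq_one_iff x).mpr ?_
      exact Subgroup.mem_subgroupOf.mpr (Subgroup.mem_sup_right hx)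
    have hcomm : ∀ a b : ↥K ⧸ W', a * b = b * a := by
      intro a b
      obtain ⟨x, rfl⟩ := QuotientGroup.mk'_surjective W' a
      obtain ⟨y, rfl⟩ := QuotientGroup.mk'_surjective W' b
      rw [← commutatorElement_eq_one_iff_mul_comm, ← map_commutatorElement]
      refine hPW' _ ?_
      have : ((⁅x, y⁆ : ↥K) : G) = ⁅(x : G), (y : G)⁆ := by
        simp [commutatorElement_def]
      rw [this]
      exact hcommP x y
    have hexp : ∀ a : ↥K ⧸ W', a ^ l = 1 := by
      intro a
      obtain ⟨x, rfl⟩ := QuotientGroup.mk'_surjective W' a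
      rw [← map_pow]
      refine hPW' _ ?_
      have : ((x ^ l : ↥K) : G) = (x : G) ^ l := by simp
      rw [this]
      exact hpowP x
    have hgenF : Subgroup.closure (⇑π '' (T : Set ↥K)) = ⊤ := by
      have h1 : Subgroup.closure (T : Set ↥K) ⊔ W' = ⊤ := by
        have hopen : IsOpen ((Subgroup.closure (T : Set ↥K) ⊔ W' : Subgroup ↥K) : Set ↥K) :=
          Subgroup.isOpen_mono le_sup_right hW'open
        have hclosed := Subgroup.isClosed_of_isOpen _ hopen
        have h2 := Subgroup.topologicalClosure_minimal
          (Subgroup.closure (T : Set ↥K)) le_sup_left hclosed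
        rw [hT] at h2
        exact top_le_iff.mp h2
      have h2 : Subgroup.map π (Subgroup.closure (T : Set ↥K) ⊔ W') = ⊤ := by
        rw [h1]
        exact Subgroup.map_top_of_surjective _ (QuotientGroup.mk'_surjective W')
      rw [Subgroup.map_sup, MonoidHom.map_closure] at h2
      have h3 : Subgroup.map π W' = ⊥ := by
        rw [eq_bot_iff]
        rintro x ⟨w, hw, rfl⟩
        have : π w = 1 := by
          rw [hπ]
          exact (QuotientGroup.eq_one_iff w).mpr hw
        simp [Subgroup.mem_bot, this]
      rw [h3, sup_bot_eq] at h2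
      exact h2
    have hcard : Nat.card (↥K ⧸ W') ≤ l ^ T.card := by
      have hgen2 : Subgroup.closure ((T.image π : Finset (↥K ⧸ W')) : Set (↥K ⧸ W')) = ⊤ := by
        rw [Finset.coe_image]
        exact hgenF
      refine le_trans (aux_card_le hl (T.image π) hgen2 hcomm hexp) ?_
      exact Nat.pow_le_pow_right hl.one_lt.le Finset.card_image_le
    constructor
    · haveI : Finite (G ⧸ W) := Subgroup.quotient_finite_of_isOpen W hWopen
      exact Subgroup.index_ne_zero_of_finite
    · rw [← Subgroup.relIndex_mul_index hWK]
      refine Nat.mul_le_mul_right _ ?_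
      have hrel : W.relIndex K = Nat.card (↥K ⧸ W') := Subgroup.index_eq_card _
      rw [hrel]
      exact hcard
  -- choose the open normal subgroup maximizing the index of `U ⊔ P`
  set Idx : Set ℕ :=
    {n | ∃ U : Subgroup G, U.Normal ∧ IsOpen (U : Set G) ∧ U ≤ K ∧ (U ⊔ P).index = n} with hIdx
  have hne : Idx.Nonempty := ⟨(K ⊔ P).index, K, hKnormal, hker_open, le_rfl, rfl⟩
  have hbdd : BddAbove Idx := by
    refine ⟨l ^ T.card * K.index, ?_⟩
    rintro n ⟨U, h1, h2, h3, rfl⟩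
    exact (bnd U h1 h2 h3).2
  obtain ⟨U₀, hU₀n, hU₀o, hU₀K, hU₀idx⟩ := Nat.sSup_mem hne hbdd
  set N := U₀ ⊔ P with hN
  have hNopen : IsOpen (N : Set G) := Subgroup.isOpen_mono le_sup_left hU₀o
  have hNK : N ≤ K := sup_le hU₀K hPK
  have hNsup : N.index = sSup Idx := hU₀idx
  have hmin : ∀ U : Subgroup G, U.Normal → IsOpen (U : Set G) → U ≤ K → N ≤ U ⊔ P := by
    intro U h1 h2 h3
    have h1' : (U ⊓ U₀).Normal := ⟨fun n hn g => ⟨h1.conj_mem _ hn.1 g, hU₀n.conj_mem _ hn.2 g⟩⟩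
    have h2' : IsOpen ((U ⊓ U₀ : Subgroup G) : Set G) := by
      rw [Subgroup.coe_inf]
      exact h2.inter hU₀o
    have h3' : U ⊓ U₀ ≤ K := le_trans inf_le_right hU₀K
    have hWle : (U ⊓ U₀) ⊔ P ≤ N := sup_le_sup_right inf_le_right P
    have hmemIdx : ((U ⊓ U₀) ⊔ P).index ∈ Idx := ⟨_, h1', h2', h3', rfl⟩
    have hle1 : ((U ⊓ U₀) ⊔ P).index ≤ N.index := hNsup ▸ le_csSup hbdd hmemIdx
    have hdvd : N.index ∣ ((U ⊓ U₀) ⊔ P).index := Subgroup.index_dvd_of_le hWle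
    have hne0 : ((U ⊓ U₀) ⊔ P).index ≠ 0 := (bnd _ h1' h2' h3').1
    have heq : ((U ⊓ U₀) ⊔ P).index = N.index :=
      le_antisymm hle1 (Nat.le_of_dvd (Nat.pos_of_ne_zero hne0) hdvd)
    have hNne0 : N.index ≠ 0 := heq ▸ hne0
    have hrel := Subgroup.relIndex_mul_index hWle
    rw [heq] at hrel
    have hone : ((U ⊓ U₀) ⊔ P).relIndex N = 1 :=
      Nat.eq_of_mul_eq_mul_right (Nat.pos_of_ne_zero hNne0) (hrel.trans (one_mul _).symm)
    exact le_trans (Subgroup.relIndex_eq_one.mp hone) (sup_le_sup_right inf_le_left P)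
  -- every maximal open subgroup contains N
  have main : ∀ M ∈ maxOpenSubgroups G, N ≤ M := by
    rintro M ⟨hMopen, hMne, hMmax⟩
    by_contra hNM
    have hMN : M ⊔ N = ⊤ := by
      refine hMmax _ (Subgroup.isOpen_mono le_sup_left hMopen) ?_
      exact lt_of_le_of_ne le_sup_left (fun h => hNM (le_sup_right.trans h.ge))
    set H := M ⊓ K with hH
    have hHopen : IsOpen (H : Set G) := by
      rw [hH, Subgroup.coe_inf]
      exact hMopen.inter hker_open
    haveI : Finite (G ⧸ H) := Subgroup.quotient_finite_of_isOpen H hHopen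
    haveI : H.FiniteIndex := Subgroup.finiteIndex_of_finite_quotient (H := H)
    set V := H.normalCore with hV
    have hVclosed : IsClosed (V : Set G) :=
      Subgroup.normalCore_isClosed H (Subgroup.isClosed_of_isOpen H hHopen)
    haveI : V.FiniteIndex := hV ▸ Subgroup.finiteIndex_normalCore H
    have hVopen : IsOpen (V : Set G) := Subgroup.isOpen_of_isClosed_of_finiteIndex V hVclosed
    have hVK : V ≤ K := le_trans H.normalCore_le inf_le_right
    have hVM : V ≤ M := le_trans H.normalCore_le inf_le_left
    have hNVP : N ≤ V ⊔ P := hmin V H.normalCore_normal hVopen hVK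
    have hMPtop : M ⊔ P = ⊤ := by
      rw [eq_top_iff, ← hMN]
      refine sup_le le_sup_left (le_trans hNVP (sup_le ?_ le_sup_right))
      exact le_trans hVM le_sup_left
    have hdecomp : ∀ k ∈ K, k ∈ H ⊔ P := by
      intro k hkK
      have hk : k ∈ (↑(M ⊔ P) : Set G) := by rw [hMPtop]; trivial
      rw [Subgroup.mul_normal M P] at hk
      obtain ⟨m, hm, p, hp, hmul⟩ := hk
      have hmK : m ∈ K := by
        have : m = k * p⁻¹ := by rw [← hmul]; group
        rw [this]
        exact mul_mem hkK (inv_mem (hPK hp))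
      have : k = m * p := hmul.symm
      rw [this]
      exact mul_mem (Subgroup.mem_sup_left ⟨hm, hmK⟩) (Subgroup.mem_sup_right hp)
    have hKH : K ≤ H := core H hHopen inf_le_right hdecomp
    exact hNM (le_trans hNK (le_trans hKH inf_le_left))
  have hNle : N ≤ frattiniOpen G := le_sInf main
  exact Subgroup.isOpen_mono hNle hNopen
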